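/- Set m = min(⌊d/2⌋, n). Then det(M_d') = det(V(2m, 2m+1, …, d)) · ∏_{j=0}^{m−1} ( det(V(2j, 2j+1, …, d)) · ∏_{ν ∈ Λ*_{d,n,j+1}} 2(ℓ_ν − ℓ_{ν_{(j)}}) ). -/

import Mathlib

open Finset Polynomial

namespace Capelli

/-- The set `ℙ_{k,n}` of pairs `μ = (μ₁, μ₂)` of nonnegative integers with `μ₁ ≥ μ₂`,
`μ₁ + μ₂ = k` and `μ₂ ≤ n`. -/
def Pkn (n k : ℕ) : Finset (ℕ × ℕ) :=
  (Finset.range (k + 1) ×ˢ Finset.range (k + 1)).filter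
    (fun μ => μ.2 ≤ μ.1 ∧ μ.1 + μ.2 = k ∧ μ.2 ≤ n)

/-- The set `ℙ*_{k,n}` of pairs `ν = (ν₁, ν₂)` of nonnegative integers with `ν₁ ≥ ν₂`,
`ν₁ + ν₂ = k` and `ν₂ ≥ ⌊k/2⌋ - n` (written here additively to avoid truncated subtraction). -/
def PknStar (n k : ℕ) : Finset (ℕ × ℕ) :=
  (Finset.range (k + 1) ×ˢ Finset.range (k + 1)).filter
    (fun ν => ν.2 ≤ ν.1 ∧ ν.1 + ν.2 = k ∧ k / 2 ≤ ν.2 + n)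

/-- `Λ_{d,n} = ⋃_{k=0}^d ℙ_{k,n}`. -/
def Lam (n d : ℕ) : Finset (ℕ × ℕ) := (Finset.range (d + 1)).biUnion (Pkn n)

/-- `Λ*_{d,n} = ⋃_{k=0}^d ℙ*_{k,n}`. -/
def LamStar (n d : ℕ) : Finset (ℕ × ℕ) := (Finset.range (d + 1)).biUnion (PknStar n)

/-- `ℓ_ν = min(ν₁ - ν₂, 2n + 1 - (ν₁ - ν₂))`. -/
def ell (n : ℕ) (ν : ℕ × ℕ) : ℕ := min (ν.1 - ν.2) (2 * n + 1 - (ν.1 - ν.2))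

/-- `Λ_{d,n,j} = {μ ∈ Λ_{d,n} : μ₂ ≥ j}`. -/
def Lamj (n d j : ℕ) : Finset (ℕ × ℕ) := (Lam n d).filter (fun μ => j ≤ μ.2)

/-- `Λ*_{d,n,j} = {ν ∈ Λ*_{d,n} : ν₂ ≤ ⌊|ν|/2⌋ - j}`. -/
def LamStarj (n d j : ℕ) : Finset (ℕ × ℕ) :=
  (LamStar n d).filter (fun ν => ν.2 + j ≤ (ν.1 + ν.2) / 2)

/-- `ν_{(j)} = (|ν| - ⌊|ν|/2⌋ + j, ⌊|ν|/2⌋ - j)`. -/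
def nuSub (ν : ℕ × ℕ) (j : ℕ) : ℕ × ℕ :=
  (ν.1 + ν.2 - (ν.1 + ν.2) / 2 + j, (ν.1 + ν.2) / 2 - j)

/-- The polynomial `λ_{μ,ν}(x) = ((2x+1)ℓ_ν - ℓ_ν²)^{μ₂} (ν₁+ν₂)^{μ₁-μ₂} ∈ ℤ[x]`. -/
noncomputable def lamPoly (n : ℕ) (μ ν : ℕ × ℕ) : Polynomial ℤ :=
  ((2 * X + 1) * C (ell n ν : ℤ) - C ((ell n ν : ℤ) ^ 2)) ^ μ.2 *
    C ((ν.1 + ν.2 : ℕ) : ℤ) ^ (μ.1 - μ.2)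

/-- The row ordering: `μ ⪯ μ'` iff `μ₂ < μ₂'`, or `μ₂ = μ₂'` and `μ₁ ≤ μ₁'`. -/
def rowRel (μ μ' : ℕ × ℕ) : Prop := μ.2 < μ'.2 ∨ (μ.2 = μ'.2 ∧ μ.1 ≤ μ'.1)

/-- The column ordering: `ν ⩽ ν'` iff `⌊(ν₁-ν₂)/2⌋ < ⌊(ν₁'-ν₂')/2⌋`, or these are equal and
`|ν| ≤ |ν'|`.  (A further tie-break by the first coordinate is added so that the relation is
antisymmetric on all of `ℕ × ℕ`; on `Λ*_{d,n}` a tie in the first two comparisons forces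
equality, so this agrees with the ordering of the paper there.) -/
def colRel (ν ν' : ℕ × ℕ) : Prop :=
  (ν.1 - ν.2) / 2 < (ν'.1 - ν'.2) / 2 ∨
    ((ν.1 - ν.2) / 2 = (ν'.1 - ν'.2) / 2 ∧
      (ν.1 + ν.2 < ν'.1 + ν'.2 ∨ (ν.1 + ν.2 = ν'.1 + ν'.2 ∧ ν.1 ≤ ν'.1)))

instance : DecidableRel rowRel := fun a b =>
  inferInstanceAs (Decidable (a.2 < b.2 ∨ (a.2 = b.2 ∧ a.1 ≤ b.1)))

instance : IsTrans (ℕ × ℕ) rowRel := ⟨by intro a b c; unfold rowRel; omega⟩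

instance : IsTotal (ℕ × ℕ) rowRel := ⟨by intro a b; unfold rowRel; omega⟩

instance : IsAntisymm (ℕ × ℕ) rowRel :=
  ⟨by intro a b h1 h2; unfold rowRel at h1 h2; rw [Prod.ext_iff]; omega⟩

instance : DecidableRel colRel := fun a b =>
  inferInstanceAs (Decidable ((a.1 - a.2) / 2 < (b.1 - b.2) / 2 ∨
    ((a.1 - a.2) / 2 = (b.1 - b.2) / 2 ∧
      (a.1 + a.2 < b.1 + b.2 ∨ (a.1 + a.2 = b.1 + b.2 ∧ a.1 ≤ b.1)))))

instance : IsTrans (ℕ × ℕ) colRel := ⟨by intro a b c; unfold colRel; omega⟩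

instance : IsTotal (ℕ × ℕ) colRel := ⟨by intro a b; unfold colRel; omega⟩

instance : IsAntisymm (ℕ × ℕ) colRel :=
  ⟨by intro a b h1 h2; unfold colRel at h1 h2; rw [Prod.ext_iff]; omega⟩

/-- The elements of `Λ_{d,n}` listed in increasing order for `⪯`. -/
def rowList (n d : ℕ) : List (ℕ × ℕ) := (Lam n d).sort rowRel

/-- The elements of `Λ*_{d,n}` listed in increasing order for `⩽`. -/
def colList (n d : ℕ) : List (ℕ × ℕ) := (LamStar n d).sort colRel

/-- The elements of `Λ_{d,n,j}` listed in increasing order for `⪯`. -/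
def rowListJ (n d j : ℕ) : List (ℕ × ℕ) := (Lamj n d j).sort rowRel

/-- The elements of `Λ*_{d,n,j}` listed in increasing order for `⩽`. -/
def colListJ (n d j : ℕ) : List (ℕ × ℕ) := (LamStarj n d j).sort colRel

/-- The matrix `M_d = [λ_{μ,ν}]` with rows indexed by `Λ_{d,n}` (ordered by `⪯`) and columns
indexed by `Λ*_{d,n}` (ordered by `⩽`); since `|Λ_{d,n}| = |Λ*_{d,n}|` the column list has
length `(Lam n d).card` and the `getD` access below always hits an actual entry. -/
noncomputable def Md (n d : ℕ) : Matrix (Fin (Lam n d).card) (Fin (Lam n d).card) (Polynomial ℤ) :=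
  fun i j => lamPoly n ((rowList n d).getD i.val (0, 0)) ((colList n d).getD j.val (0, 0))

/-- The matrix `M_d' = [(2ℓ_ν)^{μ₂}(ν₁+ν₂)^{μ₁-μ₂}]` of leading coefficients. -/
def Md' (n d : ℕ) : Matrix (Fin (Lam n d).card) (Fin (Lam n d).card) ℤ :=
  fun i j =>
    let μ := (rowList n d).getD i.val (0, 0)
    let ν := (colList n d).getD j.val (0, 0)
    (2 * (ell n ν : ℤ)) ^ μ.2 * ((ν.1 + ν.2 : ℕ) : ℤ) ^ (μ.1 - μ.2)

/-- `S_{μ,ν,j}` with `m = μ₂ - j`: the complete homogeneous symmetric polynomial of degree `m`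
evaluated at `ℓ_{ν_{(0)}}, …, ℓ_{ν_{(j-1)}}, ℓ_ν`, i.e. the sum over all `(j+1)`-tuples
`(a₀, …, a_j)` of nonnegative integers with `a₀ + ⋯ + a_j = m` of
`ℓ_{ν_{(0)}}^{a₀} ⋯ ℓ_{ν_{(j-1)}}^{a_{j-1}} ℓ_ν^{a_j}`. -/
def Shs (n : ℕ) (ν : ℕ × ℕ) (j m : ℕ) : ℕ :=
  ∑ a ∈ Finset.Nat.antidiagonalTuple (j + 1) m,
    ∏ i : Fin (j + 1), (if (i : ℕ) < j then ell n (nuSub ν (i : ℕ)) else ell n ν) ^ a i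

/-- The matrix `N_j = [2^{μ₂-j}(ν₁+ν₂)^{μ₁-μ₂} S_{μ,ν,j}]` with rows indexed by `Λ_{d,n,j}`
(ordered by `⪯`) and columns indexed by `Λ*_{d,n,j}` (ordered by `⩽`). -/
def Ndj (n d j : ℕ) : Matrix (Fin (Lamj n d j).card) (Fin (Lamj n d j).card) ℤ :=
  fun i i' =>
    let μ := (rowListJ n d j).getD i.val (0, 0)
    let ν := (colListJ n d j).getD i'.val (0, 0)
    2 ^ (μ.2 - j) * ((ν.1 + ν.2 : ℕ) : ℤ) ^ (μ.1 - μ.2) * (Shs n ν j (μ.2 - j) : ℤ)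

/-- The Vandermonde matrix `V(a, a+1, …, a+s-1) = [(a+j)^{i-1}]_{1 ≤ i,j ≤ s}` (0-indexed
as `[(a+j)^i]_{0 ≤ i,j ≤ s-1}`), with the convention `0⁰ = 1`. -/
def vandInt (a s : ℕ) : Matrix (Fin s) (Fin s) ℤ :=
  fun i j => ((a + (j : ℕ) : ℕ) : ℤ) ^ (i : ℕ)

/-- `f(d,s) = #{(ν,ν') ∈ Λ*_{d,n} × Λ*_{d,n} : |ν| = |ν'|, ℓ_{ν'} < ℓ_ν, ℓ_ν + ℓ_{ν'} - 1 = s}`. -/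
def fds (n d : ℕ) (s : ℤ) : ℕ :=
  (((LamStar n d) ×ˢ (LamStar n d)).filter
    (fun p => p.1.1 + p.1.2 = p.2.1 + p.2.2 ∧ ell n p.2 < ell n p.1 ∧
      (ell n p.1 : ℤ) + (ell n p.2 : ℤ) - 1 = s)).card

/-- `g_k(s) = #{(ν,ν') ∈ ℙ*_{k,n} × ℙ*_{k,n} : ℓ_{ν'} < ℓ_ν, ℓ_ν + ℓ_{ν'} - 1 = s}`. -/
def gks (n k : ℕ) (s : ℤ) : ℕ :=
  ((PknStar n k ×ˢ PknStar n k).filter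
    (fun p => ell n p.2 < ell n p.1 ∧ (ell n p.1 : ℤ) + (ell n p.2 : ℤ) - 1 = s)).card



/-- Complete homogeneous symmetric function of a list, degree `m`. -/
def Hl : List ℤ → ℕ → ℤ
  | [], 0 => 1
  | [], _ + 1 => 0
  | x :: l, m => ∑ c ∈ Finset.range (m + 1), x ^ c * Hl l (m - c)

@[simp] lemma Hl_zero (l : List ℤ) : Hl l 0 = 1 := by
  induction l with
  | nil => rfl
  | cons x l ih => simp [Hl, ih]

lemma Hl_cons (x : ℤ) (l : List ℤ) (m : ℕ) :
    Hl (x :: l) m = ∑ c ∈ Finset.range (m + 1), x ^ c * Hl l (m - c) := rfl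

lemma Hl_cons_succ (x : ℤ) (l : List ℤ) (m : ℕ) :
    Hl (x :: l) (m + 1) = Hl l (m + 1) + x * Hl (x :: l) m := by
  rw [Hl_cons, Finset.sum_range_succ', Hl_cons, Finset.mul_sum]
  simp only [pow_zero, one_mul, Nat.add_sub_cancel_left, Nat.succ_sub_succ]
  rw [add_comm]
  congr 1
  apply Finset.sum_congr rfl
  intro c _
  ring

lemma Hl_key (m : ℕ) : ∀ (l : List ℤ) (x y : ℤ),
    (Hl (x :: l) (m + 1) - Hl (y :: l) (m + 1) = (x - y) * Hl (x :: y :: l) m) ∧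
      Hl (x :: y :: l) m = Hl (y :: x :: l) m := by
  induction m with
  | zero =>
    intro l x y
    constructor
    · simp only [Hl_cons_succ, Hl_zero]; ring
    · simp
  | succ m ih =>
    intro l x y
    have hswap : Hl (x :: y :: l) m = Hl (y :: x :: l) m := (ih l x y).2
    have hdiff := fun (a b : ℤ) => (ih l a b).1
    constructor
    · rw [Hl_cons_succ x l (m + 1), Hl_cons_succ y l (m + 1)]
      have : Hl l (m + 2) + x * Hl (x :: l) (m + 1) - (Hl l (m + 2) + y * Hl (y :: l) (m + 1))
          = x * (Hl (x :: l) (m + 1) - Hl (y :: l) (m + 1)) + (x - y) * Hl (y :: l) (m + 1) := by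
        ring
      rw [this, hdiff x y, Hl_cons_succ x (y :: l) m]
      ring
    · rw [Hl_cons_succ x (y :: l) m, Hl_cons_succ y (x :: l) m, hswap]
      have := hdiff y x
      linarith [hdiff x y]

lemma Hl_sub (m : ℕ) (l : List ℤ) (x y : ℤ) :
    Hl (x :: l) (m + 1) - Hl (y :: l) (m + 1) = (x - y) * Hl (x :: y :: l) m :=
  (Hl_key m l x y).1

lemma Hl_swap (m : ℕ) (l : List ℤ) (x y : ℤ) :
    Hl (x :: y :: l) m = Hl (y :: x :: l) m :=
  (Hl_key m l x y).2

lemma Hl_perm {l l' : List ℤ} (h : l.Perm l') : ∀ m, Hl l m = Hl l' m := by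
  induction h with
  | nil => intro m; rfl
  | cons x _ ih =>
    intro m
    rw [Hl_cons, Hl_cons]
    exact Finset.sum_congr rfl fun c _ => by rw [ih]
  | swap x y l => intro m; exact Hl_swap m l y x
  | trans _ _ ih1 ih2 => intro m; rw [ih1, ih2]

lemma adt_succ_sum (k m : ℕ) (f : (Fin (k + 1) → ℕ) → ℤ) :
    ∑ a ∈ Finset.Nat.antidiagonalTuple (k + 1) m, f a
      = ∑ p ∈ Finset.range (m + 1), ∑ b ∈ Finset.Nat.antidiagonalTuple k (m - p),
          f (Fin.cons p b) := by
  rw [← Finset.sum_sigma (Finset.range (m + 1))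
    (fun p => Finset.Nat.antidiagonalTuple k (m - p))
    (fun x => f (Fin.cons x.1 x.2))]
  apply Finset.sum_nbij' (i := fun a => (⟨a 0, Fin.tail a⟩ : Σ _ : ℕ, Fin k → ℕ))
    (j := fun x => Fin.cons x.1 x.2)
  · intro a ha
    rw [Finset.Nat.mem_antidiagonalTuple] at ha
    rw [Fin.sum_univ_succ] at ha
    have h1 : ∑ i, Fin.tail a i = m - a 0 := by
      simp only [Fin.tail]; omega
    simp only [Finset.mem_sigma, Finset.mem_range, Finset.Nat.mem_antidiagonalTuple]
    exact ⟨by omega, h1⟩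
  · intro x hx
    simp only [Finset.mem_sigma, Finset.mem_range, Finset.Nat.mem_antidiagonalTuple] at hx
    rw [Finset.Nat.mem_antidiagonalTuple, Fin.sum_univ_succ]
    simp only [Fin.cons_zero, Fin.cons_succ]
    omega
  · intro a _; exact Fin.cons_self_tail a
  · intro x _; ext <;> simp [Fin.tail_cons]
  · intro a _; rw [Fin.cons_self_tail]

lemma sum_adt : ∀ (t : ℕ) (w : Fin t → ℤ) (m : ℕ),
    (∑ a ∈ Finset.Nat.antidiagonalTuple t m, ∏ i, w i ^ a i) = Hl (List.ofFn w) m := by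
  intro t
  induction t with
  | zero =>
    intro w m
    cases m with
    | zero => simp [Hl]
    | succ m => simp [Hl]
  | succ t ih =>
    intro w m
    rw [adt_succ_sum, List.ofFn_succ, Hl_cons]
    apply Finset.sum_congr rfl
    intro p _
    rw [← ih (fun i => w i.succ) (m - p), Finset.mul_sum]
    apply Finset.sum_congr rfl
    intro b _
    rw [Fin.prod_univ_succ]
    simp [Fin.cons_zero, Fin.cons_succ]

lemma Shs_cast (n : ℕ) (ν : ℕ × ℕ) (j m : ℕ) :
    (Shs n ν j m : ℤ) = Hl (List.ofFn (fun i : Fin (j + 1) =>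
      if (i : ℕ) < j then (ell n (nuSub ν (i : ℕ)) : ℤ) else (ell n ν : ℤ))) m := by
  rw [Shs, ← sum_adt]
  push_cast [apply_ite (Nat.cast : ℕ → ℤ)]
  rfl

@[simp] lemma Shs_zero_right (n : ℕ) (ν : ℕ × ℕ) (j : ℕ) : Shs n ν j 0 = 1 := by
  simp [Shs, Finset.Nat.antidiagonalTuple_zero_right]

lemma Shs_zero_left (n : ℕ) (ν : ℕ × ℕ) (m : ℕ) : Shs n ν 0 m = ell n ν ^ m := by
  simp [Shs]

/-! ### Membership lemmas -/

lemma mem_Lamj {n d j : ℕ} {μ : ℕ × ℕ} :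
    μ ∈ Lamj n d j ↔ μ.2 ≤ μ.1 ∧ μ.1 + μ.2 ≤ d ∧ μ.2 ≤ n ∧ j ≤ μ.2 := by
  simp only [Lamj, Lam, Pkn, Finset.mem_filter, Finset.mem_biUnion, Finset.mem_range,
    Finset.mem_product]
  constructor
  · rintro ⟨⟨k, hk, ⟨h1, h2⟩, h3, h4, h5⟩, h6⟩
    omega
  · intro h
    exact ⟨⟨μ.1 + μ.2, by omega, ⟨by omega, by omega⟩, by omega, rfl, by omega⟩, by omega⟩

lemma mem_LamStarj {n d j : ℕ} {ν : ℕ × ℕ} :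
    ν ∈ LamStarj n d j ↔ ν.2 ≤ ν.1 ∧ ν.1 + ν.2 ≤ d ∧ (ν.1 + ν.2) / 2 ≤ ν.2 + n ∧
      ν.2 + j ≤ (ν.1 + ν.2) / 2 := by
  simp only [LamStarj, LamStar, PknStar, Finset.mem_filter, Finset.mem_biUnion, Finset.mem_range,
    Finset.mem_product]
  constructor
  · rintro ⟨⟨k, hk, ⟨h1, h2⟩, h3, h4, h5⟩, h6⟩
    omega
  · intro h
    exact ⟨⟨ν.1 + ν.2, by omega, ⟨by omega, by omega⟩, by omega, rfl, by omega⟩, by omega⟩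

lemma mem_Lam {n d : ℕ} {μ : ℕ × ℕ} :
    μ ∈ Lam n d ↔ μ.2 ≤ μ.1 ∧ μ.1 + μ.2 ≤ d ∧ μ.2 ≤ n := by
  have : Lamj n d 0 = Lam n d := Finset.filter_true_of_mem (fun x _ => Nat.zero_le _)
  rw [← this, mem_Lamj]
  omega

lemma mem_LamStar {n d : ℕ} {ν : ℕ × ℕ} :
    ν ∈ LamStar n d ↔ ν.2 ≤ ν.1 ∧ ν.1 + ν.2 ≤ d ∧ (ν.1 + ν.2) / 2 ≤ ν.2 + n := by
  simp only [LamStar, PknStar, Finset.mem_filter, Finset.mem_biUnion, Finset.mem_range,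
    Finset.mem_product]
  constructor
  · rintro ⟨k, hk, ⟨h1, h2⟩, h3, h4, h5⟩
    omega
  · intro h
    exact ⟨ν.1 + ν.2, by omega, ⟨by omega, by omega⟩, by omega, rfl, by omega⟩

lemma Lamj_zero (n d : ℕ) : Lamj n d 0 = Lam n d :=
  Finset.filter_true_of_mem (fun x _ => Nat.zero_le _)

lemma LamStarj_zero (n d : ℕ) : LamStarj n d 0 = LamStar n d := by
  apply Finset.filter_true_of_mem
  intro x hx
  rw [mem_LamStar] at hx
  omega

/-! ### The map `gmap` -/

/-- The canonical bijection from rows to columns: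
`μ = (μ₁, μ₂) ↦ ν` with `|ν| = |μ|` and `⌊(ν₁ - ν₂)/2⌋ = μ₂`. -/
def gmap (μ : ℕ × ℕ) : ℕ × ℕ :=
  (μ.1 + μ.2 - (μ.1 + μ.2) / 2 + μ.2, (μ.1 + μ.2) / 2 - μ.2)

lemma gmap_sum {μ : ℕ × ℕ} (h : μ.2 ≤ μ.1) : (gmap μ).1 + (gmap μ).2 = μ.1 + μ.2 := by
  simp only [gmap]; omega

lemma gmap_mem {n d j : ℕ} {μ : ℕ × ℕ} (h : μ ∈ Lamj n d j) : gmap μ ∈ LamStarj n d j := by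
  rw [mem_Lamj] at h
  rw [mem_LamStarj]
  simp only [gmap]
  omega

lemma gmap_inj {μ μ' : ℕ × ℕ} (h : μ.2 ≤ μ.1) (h' : μ'.2 ≤ μ'.1) (e : gmap μ = gmap μ') :
    μ = μ' := by
  simp only [gmap, Prod.ext_iff] at e ⊢
  omega

lemma gmap_surj {n d j : ℕ} {ν : ℕ × ℕ} (h : ν ∈ LamStarj n d j) :
    ∃ μ ∈ Lamj n d j, gmap μ = ν := by
  rw [mem_LamStarj] at h
  refine ⟨(ν.1 + ν.2 - (ν.1 - ν.2) / 2, (ν.1 - ν.2) / 2), ?_, ?_⟩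
  · rw [mem_Lamj]; omega
  · simp only [gmap, Prod.ext_iff]
    constructor <;> omega

lemma gmap_rel {μ μ' : ℕ × ℕ} (h : μ.2 ≤ μ.1) (h' : μ'.2 ≤ μ'.1) :
    rowRel μ μ' ↔ colRel (gmap μ) (gmap μ') := by
  simp only [rowRel, colRel, gmap]
  omega

lemma colListJ_eq (n d j : ℕ) : colListJ n d j = (rowListJ n d j).map gmap := by
  have hmem : ∀ x ∈ rowListJ n d j, x ∈ Lamj n d j := fun x hx => (Finset.mem_sort _).mp hx
  have hnd : ((rowListJ n d j).map gmap).Nodup := by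
    apply (Finset.sort_nodup _ _).map_on
    intro x hx y hy hxy
    exact gmap_inj (mem_Lamj.mp (hmem x hx)).1 (mem_Lamj.mp (hmem y hy)).1 hxy
  have hperm : ((rowListJ n d j).map gmap).Perm (colListJ n d j) := by
    rw [colListJ, List.perm_ext_iff_of_nodup hnd (Finset.sort_nodup _ _)]
    intro a
    simp only [List.mem_map, Finset.mem_sort]
    constructor
    · rintro ⟨x, hx, rfl⟩
      exact gmap_mem ((Finset.mem_sort _).mp hx)
    · intro ha
      obtain ⟨μ, hμ, hgm⟩ := gmap_surj ha
      exact ⟨μ, (Finset.mem_sort _).mpr hμ, hgm⟩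
  have hs2 : ((rowListJ n d j).map gmap).Pairwise colRel := by
    rw [List.pairwise_map]
    apply List.Pairwise.imp_of_mem ?_ (Finset.pairwise_sort (r := rowRel) (Lamj n d j))
    intro a b ha hb hab
    exact (gmap_rel (mem_Lamj.mp (hmem a ha)).1 (mem_Lamj.mp (hmem b hb)).1).mp hab
  exact (List.Perm.eq_of_pairwise' hs2 (Finset.pairwise_sort _ _) hperm).symm

lemma rowListJ_zero (n d : ℕ) : rowListJ n d 0 = rowList n d := by
  rw [rowListJ, rowList, Lamj_zero]

lemma colListJ_zero (n d : ℕ) : colListJ n d 0 = colList n d := by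
  rw [colListJ, colList, LamStarj_zero]

lemma colList_eq (n d : ℕ) : colList n d = (rowList n d).map gmap := by
  rw [← colListJ_zero, ← rowListJ_zero, colListJ_eq]
/-! ### Subtype matrices -/

/-- The entry of the matrix `N_j`, as a function of the row `μ` and column `ν`. -/
def Fent (n j : ℕ) (μ ν : ℕ × ℕ) : ℤ :=
  2 ^ (μ.2 - j) * ((ν.1 + ν.2 : ℕ) : ℤ) ^ (μ.1 - μ.2) * (Shs n ν j (μ.2 - j) : ℤ)

/-- The matrix `N_j` indexed by the subtype `Λ_{d,n,j}`, with columns transported along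
the order isomorphism `gmap`. -/
def Bmat (n d j : ℕ) : Matrix {μ // μ ∈ Lamj n d j} {μ // μ ∈ Lamj n d j} ℤ :=
  fun μ μ' => Fent n j μ.1 (gmap μ'.1)

lemma Md'_det_eq (n d : ℕ) : (Md' n d).det = (Bmat n d 0).det := by
  classical
  have hcard : (Lam n d).card = (rowListJ n d 0).length := by
    rw [rowListJ, Finset.length_sort, Lamj_zero]
  have hnd : (rowListJ n d 0).Nodup := Finset.sort_nodup _ _
  let e : Fin (Lam n d).card ≃ {μ // μ ∈ Lamj n d 0} :=
    (finCongr hcard).trans ((hnd.getEquiv (rowListJ n d 0)).trans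
      (Equiv.subtypeEquivRight (fun x => Finset.mem_sort _)))
  have key : Md' n d = (Bmat n d 0).submatrix e e := by
    ext i i'
    have hi : (i : ℕ) < (rowListJ n d 0).length := by omega
    have hi' : (i' : ℕ) < (rowListJ n d 0).length := by omega
    have he : ∀ (i : Fin (Lam n d).card) (h : (i : ℕ) < (rowListJ n d 0).length),
        ((e i : ℕ × ℕ)) = (rowListJ n d 0)[(i : ℕ)] := by
      intro i h
      simp [e, List.Nodup.getEquiv]
      rfl
    have hrow : (rowList n d).getD (i : ℕ) (0, 0) = (rowListJ n d 0)[(i : ℕ)] := by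
      rw [← rowListJ_zero, List.getD_eq_getElem _ _ hi]
    have hcol : (colList n d).getD (i' : ℕ) (0, 0) = gmap ((rowListJ n d 0)[(i' : ℕ)]) := by
      rw [colList_eq, ← rowListJ_zero]
      rw [List.getD_eq_getElem _ _ (by simpa using hi')]
      simp
    simp only [Md', Matrix.submatrix_apply, Bmat, Fent, hrow, hcol, he i hi, he i' hi']
    rw [Shs_zero_left]
    push_cast
    rw [Nat.sub_zero, mul_pow]
    ring
  rw [key, Matrix.det_submatrix_equiv_self]

/-! ### The hockey-stick identity for `Shs` -/

lemma nuSub_sum {ν : ℕ × ℕ} {j : ℕ} (hj : j ≤ (ν.1 + ν.2) / 2) :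
    (nuSub ν j).1 + (nuSub ν j).2 = ν.1 + ν.2 := by
  simp only [nuSub]; omega

lemma nuSub_nuSub {ν : ℕ × ℕ} {j : ℕ} (hj : j ≤ (ν.1 + ν.2) / 2) (i : ℕ) :
    nuSub (nuSub ν j) i = nuSub ν i := by
  have h := nuSub_sum hj
  simp only [nuSub, Prod.ext_iff] at h ⊢
  omega

lemma ofFn_eq {α : Type*} {k : ℕ} {f g : Fin k → α} (h : ∀ i, f i = g i) :
    List.ofFn f = List.ofFn g := by
  congr 1; funext i; exact h i

lemma Shs_sub (n : ℕ) (ν : ℕ × ℕ) (j m : ℕ) (hj : j ≤ (ν.1 + ν.2) / 2) :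
    (Shs n ν j (m + 1) : ℤ) - (Shs n (nuSub ν j) j (m + 1) : ℤ)
      = ((ell n ν : ℤ) - (ell n (nuSub ν j) : ℤ)) * (Shs n ν (j + 1) m : ℤ) := by
  set x : ℤ := (ell n ν : ℤ)
  set y : ℤ := (ell n (nuSub ν j) : ℤ)
  set L0 : List ℤ := List.ofFn (fun i : Fin j => (ell n (nuSub ν (i : ℕ)) : ℤ)) with hL0
  have c1 : (Shs n ν j (m + 1) : ℤ) = Hl (L0 ++ [x]) (m + 1) := by
    rw [Shs_cast, List.ofFn_succ', List.concat_eq_append, hL0]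
    congr 2
    · refine ofFn_eq fun i => ?_
      simp [i.isLt]
    · simp [x]
  have c2 : (Shs n (nuSub ν j) j (m + 1) : ℤ) = Hl (L0 ++ [y]) (m + 1) := by
    rw [Shs_cast, List.ofFn_succ', List.concat_eq_append, hL0]
    congr 2
    · refine ofFn_eq fun i => ?_
      simp [i.isLt, nuSub_nuSub hj]
    · simp [y]
  have c3 : (Shs n ν (j + 1) m : ℤ) = Hl ((L0 ++ [y]) ++ [x]) m := by
    rw [Shs_cast, List.ofFn_succ', List.concat_eq_append, hL0]
    congr 2
    · rw [List.ofFn_succ', List.concat_eq_append]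
      congr 2
      · funext i
        have h1 : (i : ℕ) < j + 1 := Nat.lt_succ_of_lt i.isLt
        simp [h1]
      · simp [y]
    · simp [x]
  rw [c1, c2, c3]
  have p1 : (L0 ++ [x]).Perm (x :: L0) := List.perm_append_comm
  have p2 : (L0 ++ [y]).Perm (y :: L0) := List.perm_append_comm
  have p3 : ((L0 ++ [y]) ++ [x]).Perm (x :: y :: L0) := by
    refine (List.perm_append_comm (l₁ := L0 ++ [y]) (l₂ := [x])).trans ?_
    exact List.Perm.cons x (List.perm_append_comm (l₁ := L0) (l₂ := [y]))
  rw [Hl_perm p1 _, Hl_perm p2 _, Hl_perm p3 _]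
  exact Hl_sub m L0 x y

/-! ### Column operations preserve the determinant -/

lemma det_sub_cols {ι : Type*} [DecidableEq ι] [Fintype ι] (A : Matrix ι ι ℤ)
    (q : ι → Prop) [DecidablePred q] (τ : ι → ι) (hτ : ∀ c, ¬ q (τ c)) :
    (Matrix.of fun r c => if q c then A r c - A r (τ c) else A r c).det = A.det := by
  have aux : ∀ S : Finset ι, (∀ c ∈ S, q c) →
      (Matrix.of fun r c => if c ∈ S then A r c - A r (τ c) else A r c).det = A.det := by
    intro S
    induction S using Finset.induction_on with
    | empty =>
      intro _
      have he : (Matrix.of fun r c => if c ∈ (∅ : Finset ι) then A r c - A r (τ c) else A r c)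
          = A := by
        ext r c; simp
      rw [he]
    | @insert a S ha ih =>
      intro hq
      have hqa : q a := hq a (Finset.mem_insert_self a S)
      have hS : ∀ c ∈ S, q c := fun c hc => hq c (Finset.mem_insert_of_mem hc)
      have hane : a ≠ τ a := fun h => hτ a (h ▸ hqa)
      have hτaS : τ a ∉ S := fun h => hτ a (hS _ h)
      have key : (Matrix.of fun r c => if c ∈ insert a S then A r c - A r (τ c) else A r c)
          = (Matrix.of fun r c => if c ∈ S then A r c - A r (τ c) else A r c).updateCol a
            (fun r => (Matrix.of fun r c => if c ∈ S then A r c - A r (τ c) else A r c) r a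
              + (-1 : ℤ) • (Matrix.of fun r c => if c ∈ S then A r c - A r (τ c) else A r c) r (τ a)) := by
        ext r c
        by_cases hc : c = a
        · subst hc
          simp only [Matrix.updateCol_self, Matrix.of_apply, Finset.mem_insert_self, if_pos,
            if_neg ha, if_neg hτaS, smul_eq_mul]
          ring
        · simp only [Matrix.updateCol_ne hc, Matrix.of_apply, Finset.mem_insert, hc,
            false_or]
      rw [key, Matrix.det_updateCol_add_smul_self _ hane, ih hS]
  have : (Matrix.of fun r c => if q c then A r c - A r (τ c) else A r c)
      = (Matrix.of fun r c => if c ∈ Finset.univ.filter q then A r c - A r (τ c) else A r c) := by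
    ext r c
    simp
  rw [this, aux _ (fun c hc => (Finset.mem_filter.mp hc).2)]

/-! ### Base case -/

lemma Bmat_min (n d : ℕ) :
    (Bmat n d (min (d / 2) n)).det
      = (vandInt (2 * min (d / 2) n) (d - 2 * min (d / 2) n + 1)).det := by
  classical
  set j := min (d / 2) n with hjdef
  have h2 : 2 * j ≤ d := by omega
  have hfix : ∀ μ : {x // x ∈ Lamj n d j}, (μ : ℕ × ℕ).2 = j := by
    intro μ
    have h := mem_Lamj.mp μ.2
    omega
  let E : {x // x ∈ Lamj n d j} ≃ Fin (d - 2 * j + 1) :=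
  { toFun := fun μ => ⟨(μ : ℕ × ℕ).1 - j, by
      have h := mem_Lamj.mp μ.2
      omega⟩
    invFun := fun i => ⟨(j + (i : ℕ), j), mem_Lamj.mpr (by
      have := i.isLt
      refine ⟨by omega, by omega, by omega, by omega⟩)⟩
    left_inv := fun μ => by
      have h := mem_Lamj.mp μ.2
      have h2 := hfix μ
      apply Subtype.ext
      apply Prod.ext <;> simp <;> omega
    right_inv := fun i => by
      apply Fin.ext
      simp }
  have key : Bmat n d j = (vandInt (2 * j) (d - 2 * j + 1)).submatrix E E := by
    ext μ μ'
    have hμ := mem_Lamj.mp μ.2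
    have hμ' := mem_Lamj.mp μ'.2
    have hs : (gmap (μ' : ℕ × ℕ)).1 + (gmap (μ' : ℕ × ℕ)).2 = (μ' : ℕ × ℕ).1 + (μ' : ℕ × ℕ).2 :=
      gmap_sum hμ'.1
    have e2 : (μ : ℕ × ℕ).2 - j = 0 := by
      have := hfix μ
      omega
    simp only [Bmat, Fent, Matrix.submatrix_apply, vandInt, e2, pow_zero, one_mul,
      Shs_zero_right, Nat.cast_one, mul_one]
    have hbase : (gmap (μ' : ℕ × ℕ)).1 + (gmap (μ' : ℕ × ℕ)).2 = 2 * j + ((μ' : ℕ × ℕ).1 - j) := by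
      have := hfix μ'
      omega
    have hexp : (μ : ℕ × ℕ).1 - (μ : ℕ × ℕ).2 = (μ : ℕ × ℕ).1 - j := by
      rw [hfix μ]
    rw [hbase, hexp]
    rfl
  rw [key, Matrix.det_submatrix_equiv_self]

/-! ### Inductive step -/

lemma gmap_tau_eq {a : ℕ × ℕ} (h : a.2 ≤ a.1) (j : ℕ) (hja : 2 * j ≤ a.1 + a.2) :
    gmap (a.1 + a.2 - j, j) = nuSub (gmap a) j := by
  simp only [gmap, nuSub, Prod.ext_iff]
  constructor <;> omega

lemma Bmat_step (n d j : ℕ) (hj : j < min (d / 2) n) :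
    (Bmat n d j).det = (vandInt (2 * j) (d - 2 * j + 1)).det *
      ((∏ ν ∈ LamStarj n d (j + 1), 2 * ((ell n ν : ℤ) - (ell n (nuSub ν j) : ℤ))) *
        (Bmat n d (j + 1)).det) := by
  classical
  have hjn : j + 1 ≤ n := by omega
  have h2j : 2 * j + 2 ≤ d := by omega
  let q : {x // x ∈ Lamj n d j} → Prop := fun μ => j + 1 ≤ (μ : ℕ × ℕ).2
  have hτmem : ∀ c : {x // x ∈ Lamj n d j},
      ((c : ℕ × ℕ).1 + (c : ℕ × ℕ).2 - j, j) ∈ Lamj n d j := by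
    intro c
    have := mem_Lamj.mp c.2
    rw [mem_Lamj]
    refine ⟨by omega, by omega, by omega, by omega⟩
  let τ : {x // x ∈ Lamj n d j} → {x // x ∈ Lamj n d j} :=
    fun c => ⟨((c : ℕ × ℕ).1 + (c : ℕ × ℕ).2 - j, j), hτmem c⟩
  have hτ : ∀ c, ¬ q (τ c) := by
    intro c
    show ¬ (j + 1 ≤ j)
    omega
  let C : Matrix {x // x ∈ Lamj n d j} {x // x ∈ Lamj n d j} ℤ :=
    Matrix.of fun r c => if q c then Bmat n d j r c - Bmat n d j r (τ c)
      else Bmat n d j r c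
  have hdetC : C.det = (Bmat n d j).det := det_sub_cols _ q τ hτ
  have hrow : ∀ (r c : {x // x ∈ Lamj n d j}), ¬ q r →
      Bmat n d j r c = (((c : ℕ × ℕ).1 + (c : ℕ × ℕ).2 : ℕ) : ℤ) ^ ((r : ℕ × ℕ).1 - j) := by
    intro r c hr
    have hrm := mem_Lamj.mp r.2
    have hcm := mem_Lamj.mp c.2
    have hr2 : (r : ℕ × ℕ).2 = j := by
      simp only [q, not_le] at hr
      omega
    simp only [Bmat, Fent]
    rw [gmap_sum hcm.1, hr2, Nat.sub_self, pow_zero, one_mul, Shs_zero_right, Nat.cast_one,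
      mul_one]
  have hzero : ∀ r, ¬ q r → ∀ c, q c → C r c = 0 := by
    intro r hr c hc
    have hsum : ((τ c : ℕ × ℕ)).1 + ((τ c : ℕ × ℕ)).2 = (c : ℕ × ℕ).1 + (c : ℕ × ℕ).2 := by
      have := mem_Lamj.mp c.2
      show (c : ℕ × ℕ).1 + (c : ℕ × ℕ).2 - j + j = _
      omega
    simp only [C, Matrix.of_apply, if_pos hc, hrow r c hr, hrow r (τ c) hr, hsum, sub_self]
  rw [← hdetC, Matrix.twoBlockTriangular_det C q hzero]
  -- the Vandermonde block
  let E1 : {a : {x // x ∈ Lamj n d j} // ¬ q a} ≃ Fin (d - 2 * j + 1) :=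
  { toFun := fun a => ⟨((a : {x // x ∈ Lamj n d j}) : ℕ × ℕ).1 - j, by
      have h := mem_Lamj.mp a.1.2
      omega⟩
    invFun := fun i => ⟨⟨(j + (i : ℕ), j), mem_Lamj.mpr (by
      have := i.isLt
      refine ⟨by omega, by omega, by omega, by omega⟩)⟩, by
      show ¬ (j + 1 ≤ j)
      omega⟩
    left_inv := fun a => by
      have h := mem_Lamj.mp a.1.2
      have h2 : ((a : {x // x ∈ Lamj n d j}) : ℕ × ℕ).2 = j := by
        have := a.2
        simp only [q, not_le] at this
        omega
      apply Subtype.ext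
      apply Subtype.ext
      apply Prod.ext <;> simp <;> omega
    right_inv := fun i => by
      apply Fin.ext
      simp }
  have hblock2 : Matrix.toSquareBlockProp C (fun i => ¬ q i)
      = (vandInt (2 * j) (d - 2 * j + 1)).submatrix E1 E1 := by
    ext a a'
    have hcm := mem_Lamj.mp a'.1.2
    have hc2 : ((a' : {x // x ∈ Lamj n d j}) : ℕ × ℕ).2 = j := by
      have := a'.2
      simp only [q, not_le] at this
      omega
    simp only [Matrix.toSquareBlockProp, Matrix.toBlock_apply, C, Matrix.of_apply,
      if_neg a'.2, Matrix.submatrix_apply, vandInt]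
    rw [hrow _ _ a.2]
    have hb : ((a' : {x // x ∈ Lamj n d j}) : ℕ × ℕ).1 + ((a' : {x // x ∈ Lamj n d j}) : ℕ × ℕ).2
        = 2 * j + (((a' : {x // x ∈ Lamj n d j}) : ℕ × ℕ).1 - j) := by
      omega
    rw [hb]
    rfl
  -- the remaining block
  let E2 : {a : {x // x ∈ Lamj n d j} // q a} ≃ {x // x ∈ Lamj n d (j + 1)} :=
  { toFun := fun a => ⟨(a : {x // x ∈ Lamj n d j}), mem_Lamj.mpr (by
      have h := mem_Lamj.mp a.1.2
      have h2 : j + 1 ≤ ((a : {x // x ∈ Lamj n d j}) : ℕ × ℕ).2 := a.2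
      exact ⟨h.1, h.2.1, h.2.2.1, h2⟩)⟩
    invFun := fun x => ⟨⟨x.1, mem_Lamj.mpr (by
      have h := mem_Lamj.mp x.2
      exact ⟨h.1, h.2.1, h.2.2.1, by omega⟩)⟩, by
      have h := mem_Lamj.mp x.2
      exact h.2.2.2⟩
    left_inv := fun a => by
      apply Subtype.ext
      apply Subtype.ext
      rfl
    right_inv := fun x => rfl }
  let v : {a : {x // x ∈ Lamj n d j} // q a} → ℤ :=
    fun a => 2 * ((ell n (gmap (a : {x // x ∈ Lamj n d j})) : ℤ)
      - (ell n (nuSub (gmap (a : {x // x ∈ Lamj n d j})) j) : ℤ))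
  have hblock1 : Matrix.toSquareBlockProp C q
      = Matrix.of (fun r c => v c * ((Bmat n d (j + 1)).submatrix E2 E2 r c)) := by
    ext ⟨⟨rp, hrmem⟩, hrq⟩ ⟨⟨cp, hcmem⟩, hcq⟩
    have hrm := mem_Lamj.mp hrmem
    have hcm := mem_Lamj.mp hcmem
    have hrq' : j + 1 ≤ rp.2 := hrq
    have hcq' : j + 1 ≤ cp.2 := hcq
    have hsum1 : (gmap cp).1 + (gmap cp).2 = cp.1 + cp.2 := gmap_sum hcm.1
    have hdiv : j ≤ ((gmap cp).1 + (gmap cp).2) / 2 := by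
      rw [hsum1]
      omega
    have hgt : gmap ((τ ⟨cp, hcmem⟩ : {x // x ∈ Lamj n d j}) : ℕ × ℕ) = nuSub (gmap cp) j :=
      gmap_tau_eq hcm.1 j (by omega)
    have hsum2 : (nuSub (gmap cp) j).1 + (nuSub (gmap cp) j).2 = cp.1 + cp.2 := by
      rw [nuSub_sum hdiv, hsum1]
    have hexp : rp.2 - j = (rp.2 - (j + 1)) + 1 := by omega
    have hqc : q ⟨cp, hcmem⟩ := hcq
    simp only [Matrix.toSquareBlockProp, Matrix.toBlock_apply, C, Matrix.of_apply,
      if_pos hqc, Bmat, Fent, Matrix.submatrix_apply]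
    have hE2 : ((E2 ⟨⟨cp, hcmem⟩, hcq⟩ : {x // x ∈ Lamj n d (j + 1)}) : ℕ × ℕ) = cp := rfl
    rw [hgt, hE2, hsum1, hsum2, hexp]
    have hkey := Shs_sub n (gmap cp) j (rp.2 - (j + 1)) hdiv
    show _ - _ = 2 * ((ell n (gmap cp) : ℤ) - (ell n (nuSub (gmap cp) j) : ℤ)) * _
    rw [pow_succ]
    linear_combination (((cp.1 + cp.2 : ℕ) : ℤ) ^ (rp.1 - rp.2) * 2 ^ (rp.2 - (j + 1)) * 2) * hkey
  have hprod : (∏ c : {a : {x // x ∈ Lamj n d j} // q a}, v c)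
      = ∏ ν ∈ LamStarj n d (j + 1), 2 * ((ell n ν : ℤ) - (ell n (nuSub ν j) : ℤ)) := by
    have h1 : (∏ c : {a : {x // x ∈ Lamj n d j} // q a}, v c)
        = ∏ x : {x // x ∈ Lamj n d (j + 1)},
            2 * ((ell n (gmap (x : ℕ × ℕ)) : ℤ) - (ell n (nuSub (gmap (x : ℕ × ℕ)) j) : ℤ)) :=
      Fintype.prod_equiv E2 _ _ (fun a => rfl)
    rw [h1, Finset.prod_coe_sort_eq_attach,
      Finset.prod_attach (Lamj n d (j + 1))
        (fun ν => 2 * ((ell n (gmap ν) : ℤ) - (ell n (nuSub (gmap ν) j) : ℤ)))]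
    apply Finset.prod_nbij (i := gmap)
    · intro a ha
      exact gmap_mem ha
    · intro a ha b hb hab
      exact gmap_inj (mem_Lamj.mp ha).1 (mem_Lamj.mp hb).1 hab
    · intro ν hν
      obtain ⟨μ, hμ, hgm⟩ := gmap_surj hν
      exact ⟨μ, hμ, hgm⟩
    · intro a _
      rfl
  rw [hblock1, hblock2, Matrix.det_submatrix_equiv_self]
  rw [show (Matrix.of (fun r c => v c * ((Bmat n d (j + 1)).submatrix E2 E2 r c))).det
      = (∏ c, v c) * ((Bmat n d (j + 1)).submatrix E2 E2).det from
    Matrix.det_mul_row v _]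
  rw [Matrix.det_submatrix_equiv_self, hprod]
  ring

/-! ### Chaining the steps -/

lemma Bmat_chain (n d : ℕ) : ∀ t j, j + t = min (d / 2) n →
    (Bmat n d j).det = (vandInt (2 * min (d / 2) n) (d - 2 * min (d / 2) n + 1)).det *
      ∏ i ∈ Finset.Ico j (min (d / 2) n),
        ((vandInt (2 * i) (d - 2 * i + 1)).det *
          ∏ ν ∈ LamStarj n d (i + 1), 2 * ((ell n ν : ℤ) - (ell n (nuSub ν i) : ℤ))) := by
  intro t
  induction t with
  | zero =>
    intro j hj
    have : j = min (d / 2) n := by omega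
    subst this
    rw [Finset.Ico_self, Finset.prod_empty, mul_one, Bmat_min]
  | succ t ih =>
    intro j hj
    have hlt : j < min (d / 2) n := by omega
    rw [Bmat_step n d j hlt, ih (j + 1) (by omega)]
    rw [Finset.prod_eq_prod_Ico_succ_bot hlt]
    ring

/-- Set `m = min(⌊d/2⌋, n)`.  Then
`det(M_d') = det(V(2m, 2m+1, …, d)) ·
  ∏_{j=0}^{m-1} ( det(V(2j, 2j+1, …, d)) · ∏_{ν ∈ Λ*_{d,n,j+1}} 2(ℓ_ν - ℓ_{ν_{(j)}}) )`. -/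
theorem det_Md' (n d : ℕ) :
    (Md' n d).det =
      (vandInt (2 * min (d / 2) n) (d - 2 * min (d / 2) n + 1)).det *
        ∏ j ∈ Finset.range (min (d / 2) n),
          ((vandInt (2 * j) (d - 2 * j + 1)).det *
            ∏ ν ∈ LamStarj n d (j + 1), 2 * ((ell n ν : ℤ) - (ell n (nuSub ν j) : ℤ))) := by
  rw [Md'_det_eq, Bmat_chain n d (min (d / 2) n) 0 (by omega), Finset.range_eq_Ico]

end Capelli
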